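/- Let R ⊆ A be integral domains and Φ : A → R a retraction with finitely generated kernel. Suppose p is a nonzero nonunit of R (and a nonunit of A) such that A[1/p] is a polynomial ring in one variable over R[1/p]. Then there exists x ∈ Ker Φ with x ∉ pA such that A[1/p] = R[1/p][x]. -/

import Mathlib

/-- Let `R ⊆ A` be integral domains and `Φ : A → R` a retraction
with finitely generated kernel. Suppose `p` is a nonzero element of `R`, a nonunit
in `R` and in `A`, such that `A[1/p]` is a polynomial ring in one variable over
`R[1/p]`.  (We encode `A[1/p] = R[1/p][x₀]` with `x₀` transcendental over `R`, by:
every `a ∈ A` satisfies `pⁿ a ∈ R[x₀]` for some `n`.)  Then there exists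
`x ∈ Ker Φ` with `x ∉ pA` such that `A[1/p] = R[1/p][x]`. -/
theorem stmt5 {A : Type*} [CommRing A] [IsDomain A] (R : Subring A)
    (Φ : A →+* R) (hΦ : ∀ r : R, Φ (r : A) = r)
    (hfg : (RingHom.ker Φ).FG)
    (p : R) (hp0 : p ≠ 0) (hpR : ¬ IsUnit p) (hpA : ¬ IsUnit (p : A))
    (hloc : ∃ x₀ : A, Transcendental R x₀ ∧
      ∀ a : A, ∃ n : ℕ, (p : A) ^ n * a ∈ Algebra.adjoin R {x₀}) :
    ∃ x : A, Φ x = 0 ∧ x ∉ Ideal.span {(p : A)} ∧ Transcendental R x ∧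
      ∀ a : A, ∃ n : ℕ, (p : A) ^ n * a ∈ Algebra.adjoin R {x} := by
  classical
  obtain ⟨x₀, htr, hgen⟩ := hloc
  have halg : ∀ r : R, algebraMap R A r = (r : A) := fun r => rfl
  obtain ⟨c, hc⟩ : ∃ c : R, c = Φ x₀ := ⟨Φ x₀, rfl⟩
  obtain ⟨x', hx'def⟩ : ∃ x' : A, x' = x₀ - (c : A) := ⟨_, rfl⟩
  have hΦx' : Φ x' = 0 := by
    rw [hx'def, map_sub, hΦ, ← hc, sub_self]
  have hx'0 : x' ≠ 0 := by
    intro h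
    apply htr
    refine ⟨Polynomial.X - Polynomial.C c, Polynomial.X_sub_C_ne_zero c, ?_⟩
    rw [hx'def, sub_eq_zero] at h
    simp [halg, ← h]
  -- key: elements of the kernel lying in `adjoin R {x₀}` are divisible by `x'`
  have key : ∀ b : A, Φ b = 0 → b ∈ Algebra.adjoin R {x₀} → x' ∣ b := by
    intro b hb hmem
    rw [Algebra.adjoin_singleton_eq_range_aeval] at hmem
    obtain ⟨f, hf⟩ := hmem
    have hf' : Polynomial.aeval x₀ f = b := hf
    have hΦcomp : Φ.comp (algebraMap R A) = RingHom.id R := by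
      ext r; simp [halg, hΦ]
    have heval : Polynomial.eval c f = 0 := by
      have h2 : Φ (Polynomial.aeval x₀ f) = 0 := by rw [hf', hb]
      rw [Polynomial.aeval_def, Polynomial.hom_eval₂, hΦcomp, ← hc] at h2
      exact h2
    obtain ⟨g, hg⟩ := Polynomial.dvd_iff_isRoot.mpr heval
    refine ⟨Polynomial.aeval x₀ g, ?_⟩
    rw [← hf', hg, map_mul]
    congr 1
    simp [halg, hx'def]
  -- uniform bound on kernel
  obtain ⟨s, hs⟩ := hfg
  have hmem : ∀ a : s, ∃ n : ℕ, x' ∣ (p : A) ^ n * (a : A) := by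
    intro a
    have haker : (a : A) ∈ RingHom.ker Φ := by
      rw [← hs]; exact Ideal.subset_span a.2
    obtain ⟨n, hn⟩ := hgen (a : A)
    refine ⟨n, key _ ?_ hn⟩
    have h0 : Φ (a : A) = 0 := haker
    rw [map_mul, h0, mul_zero]
  choose nf hnf using hmem
  obtain ⟨N, hNle⟩ : ∃ N : ℕ, ∀ a : s, nf a ≤ N :=
    ⟨s.attach.sup nf, fun a => Finset.le_sup (Finset.mem_attach _ _)⟩
  have hkerdvd : ∀ b : A, Φ b = 0 → x' ∣ (p : A) ^ N * b := by
    intro b hb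
    have hbmem : b ∈ Ideal.span (s : Set A) := by rw [hs]; exact hb
    refine Submodule.span_induction ?_ ?_ ?_ ?_ hbmem
    · intro a ha
      obtain ⟨mm, hmm⟩ : ∃ mm, N = nf ⟨a, ha⟩ + mm :=
        Nat.exists_eq_add_of_le (hNle ⟨a, ha⟩)
      calc x' ∣ (p : A) ^ (nf ⟨a, ha⟩) * a := hnf ⟨a, ha⟩
        _ ∣ (p : A) ^ N * a := ⟨(p : A) ^ mm, by rw [hmm, pow_add]; ring⟩
    · exact ⟨0, by simp⟩
    · intro u v _ _ hu hv
      rw [mul_add]; exact dvd_add hu hv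
    · intro a u _ hu
      rcases hu with ⟨z, hz⟩
      exact ⟨a * z, by simp only [smul_eq_mul]; rw [mul_left_comm, hz]; ring⟩
  -- not all powers of p divide x'
  have hnotall : ∃ n : ℕ, ¬ (p : A) ^ n ∣ x' := by
    by_contra hall
    push_neg at hall
    obtain ⟨y, hy⟩ := hall (N + 1)
    have hΦy : Φ y = 0 := by
      have h1 : Φ ((p : A) ^ (N + 1) * y) = 0 := by rw [← hy, hΦx']
      rw [map_mul, map_pow, hΦ] at h1
      rcases mul_eq_zero.mp h1 with h | h
      · exact absurd h (pow_ne_zero _ hp0)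
      · exact h
    obtain ⟨z, hz⟩ := hkerdvd y hΦy
    rw [hy] at hz
    have hy0 : y ≠ 0 := by
      intro h; apply hx'0; rw [hy, h, mul_zero]
    have hpA0 : (p : A) ≠ 0 := fun h => hp0 (by exact_mod_cast h)
    have hne : (p : A) ^ N * y ≠ 0 := mul_ne_zero (pow_ne_zero _ hpA0) hy0
    have h2 : (p : A) ^ N * y * 1 = (p : A) ^ N * y * ((p : A) * z) := by
      rw [mul_one]; rw [pow_succ] at hz; linear_combination hz
    have h1 : (1 : A) = (p : A) * z := mul_left_cancel₀ hne h2
    exact hpA (IsUnit.of_mul_eq_one (b := z) h1.symm)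
  obtain ⟨k, hk1, hk2⟩ : ∃ k : ℕ, (p : A) ^ k ∣ x' ∧ ¬ (p : A) ^ (k + 1) ∣ x' := by
    have h0 : Nat.find hnotall ≠ 0 := by
      intro h0
      have := Nat.find_spec hnotall
      rw [h0] at this
      exact this (by simp)
    refine ⟨Nat.find hnotall - 1, ?_, ?_⟩
    · by_contra h
      have := Nat.find_min' hnotall h
      omega
    · have he : Nat.find hnotall - 1 + 1 = Nat.find hnotall := by omega
      rw [he]
      exact Nat.find_spec hnotall
  obtain ⟨w, hw⟩ := hk1
  have hnd : ¬ (p : A) ∣ w := by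
    rintro ⟨z, hz⟩
    apply hk2
    refine ⟨z, ?_⟩
    rw [hw, hz, ← mul_assoc, ← pow_succ]
  have hpk : algebraMap R A (p ^ k) = (p : A) ^ k := by
    rw [halg]; push_cast; ring
  refine ⟨w, ?_, ?_, ?_, ?_⟩
  · -- Φ w = 0
    have h1 : Φ ((p : A) ^ k * w) = 0 := by rw [← hw, hΦx']
    rw [map_mul, map_pow, hΦ] at h1
    rcases mul_eq_zero.mp h1 with h | h
    · exact absurd h (pow_ne_zero _ hp0)
    · exact h
  · -- w ∉ pA
    intro h
    exact hnd (Ideal.mem_span_singleton.mp h)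
  · -- transcendental
    rintro ⟨f, hf0, hfw⟩
    have h1 : Polynomial.aeval ((p : A) ^ k * w) (f.scaleRoots (p ^ k)) = 0 := by
      have := Polynomial.scaleRoots_aeval_eq_zero (r := p ^ k) hfw
      rwa [hpk] at this
    rw [← hw] at h1
    have hq0 : f.scaleRoots (p ^ k) ≠ 0 := Polynomial.scaleRoots_ne_zero hf0 _
    apply htr
    refine ⟨(f.scaleRoots (p ^ k)).comp (Polynomial.X - Polynomial.C c), ?_, ?_⟩
    · have he : (f.scaleRoots (p ^ k)).comp (Polynomial.X - Polynomial.C c)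
          = Polynomial.taylor (-c) (f.scaleRoots (p ^ k)) := by
        rw [Polynomial.taylor_apply, map_neg, ← sub_eq_add_neg]
      rw [he]
      intro h
      exact hq0 (Polynomial.taylor_injective (-c) (by simpa using h))
    · rw [Polynomial.aeval_comp]
      have he : Polynomial.aeval x₀ (Polynomial.X - Polynomial.C c) = x' := by
        simp [halg, hx'def]
      rw [he, h1]
  · -- generation
    intro a
    obtain ⟨n, hn⟩ := hgen a
    refine ⟨n, ?_⟩
    have hle : Algebra.adjoin R {x₀} ≤ Algebra.adjoin R {w} := by
      apply Algebra.adjoin_le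
      intro y hy
      rw [Set.mem_singleton_iff] at hy
      rw [hy]
      have hx₀ : x₀ = (p : A) ^ k * w + (c : A) := by
        rw [← hw, hx'def]; ring
      rw [hx₀]
      refine Subalgebra.add_mem _ (Subalgebra.mul_mem _ ?_ ?_) ?_
      · have := Subalgebra.algebraMap_mem (Algebra.adjoin R {w}) (p ^ k)
        rwa [hpk] at this
      · exact Algebra.subset_adjoin rfl
      · exact Subalgebra.algebraMap_mem _ c
    exact hle hn
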